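/- Inference rule R9: let v : AP → B₃ be a three-valued valuation and let C₁, …, Cₙ be a nonempty list of clauses (each a nonempty finite list of literals) such that in each clause Cᵢ at most one literal has a definite Kleene value under v (all other literals of Cᵢ have value ?). If the Kleene disjunction of the conjunctive Kleene values of C₁, …, Cₙ equals ff, then for every clause Cᵢ and every literal ℓ of Cᵢ whose Kleene value under v is definite: if ℓ is a positive atom a then v a = ff, and if ℓ is a negated atom ¬a then v a = tt. -/

import Mathlib

/-- The three-valued Kleene domain: `some true` is tt, `some false` is ff, `none` is ?. -/
abbrev B3 := Option Bool

/-- Kleene conjunction. -/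
def kand : B3 → B3 → B3
  | some false, _ => some false
  | _, some false => some false
  | some true, some true => some true
  | _, _ => none

/-- Kleene disjunction. -/
def kor : B3 → B3 → B3
  | some true, _ => some true
  | _, some true => some true
  | some false, some false => some false
  | _, _ => none

/-- Kleene negation. -/
def knot : B3 → B3
  | some b => some (!b)
  | none => none

/-- Kleene conjunction of a list: `a₁ ⊓ a₂ ⊓ … ⊓ aₙ`. -/
def kandList (l : List B3) : B3 := l.foldr kand (some true)

/-- Kleene disjunction of a list: `a₁ ⊔ a₂ ⊔ … ⊔ aₙ`. -/
def korList (l : List B3) : B3 := l.foldr kor (some false)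

/-- A literal: a positive or a negated atom. -/
inductive Lit (AP : Type) : Type
  | pos : AP → Lit AP
  | neg : AP → Lit AP

/-- The Kleene value of a literal under a three-valued valuation. -/
def litVal {AP : Type} (v : AP → B3) : Lit AP → B3
  | .pos a => v a
  | .neg a => knot (v a)

/-- Conjunctive Kleene value of a clause (a list of literals). -/
def clauseAnd {AP : Type} (v : AP → B3) (C : List (Lit AP)) : B3 :=
  kandList (C.map (litVal v))

/-- Disjunctive Kleene value of a clause (a list of literals). -/
def clauseOr {AP : Type} (v : AP → B3) (C : List (Lit AP)) : B3 :=
  korList (C.map (litVal v))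


lemma kor_ff {a b : B3} : kor a b = some false ↔ a = some false ∧ b = some false := by
  rcases a with _ | (_|_) <;> rcases b with _ | (_|_) <;> simp [kor]

lemma kand_ff {a b : B3} : kand a b = some false ↔ a = some false ∨ b = some false := by
  rcases a with _ | (_|_) <;> rcases b with _ | (_|_) <;> simp [kand]

lemma korList_ff {l : List B3} (h : korList l = some false) :
    ∀ x ∈ l, x = some false := by
  induction l with
  | nil => simp
  | cons a t ih =>
    have h' : kor a (korList t) = some false := h
    rw [kor_ff] at h'
    intro x hx
    rcases List.mem_cons.mp hx with rfl | hx
    · exact h'.1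
    · exact ih h'.2 x hx

lemma kandList_ff {l : List B3} (h : kandList l = some false) :
    ∃ x ∈ l, x = some false := by
  induction l with
  | nil => simp [kandList] at h
  | cons a t ih =>
    have h' : kand a (kandList t) = some false := h
    rw [kand_ff] at h'
    rcases h' with h' | h'
    · exact ⟨a, List.mem_cons_self, h'⟩
    · obtain ⟨x, hx, hxf⟩ := ih h'
      exact ⟨x, List.mem_cons_of_mem _ hx, hxf⟩

lemma two_countP {α : Type} (p : α → Bool) :
    ∀ (l : List α) (a b : α), a ∈ l → b ∈ l → a ≠ b → p a → p b →
      2 ≤ l.countP p := by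
  intro l
  induction l with
  | nil => simp
  | cons c t ih =>
    intro a b ha hb hab hpa hpb
    rcases List.mem_cons.mp ha with rfl | ha
    · rcases List.mem_cons.mp hb with rfl | hb
      · exact absurd rfl hab
      · have h1 : 0 < t.countP p := List.countP_pos_iff.mpr ⟨b, hb, hpb⟩
        rw [List.countP_cons_of_pos hpa]; omega
    · rcases List.mem_cons.mp hb with rfl | hb
      · rcases List.mem_cons.mp ha with rfl | ha
        · exact absurd rfl hab
        · have h1 : 0 < t.countP p := List.countP_pos_iff.mpr ⟨a, ha, hpa⟩
          rw [List.countP_cons_of_pos hpb]; omega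
      · have h2 := ih a b ha hb hab hpa hpb
        rw [List.countP_cons]; omega

theorem rule_R9 {AP : Type} (v : AP → B3) (Cs : List (List (Lit AP)))
    (hne : Cs ≠ []) (hCne : ∀ C ∈ Cs, C ≠ [])
    (hdef : ∀ C ∈ Cs, (C.countP (fun ℓ => (litVal v ℓ).isSome)) ≤ 1)
    (h : korList (Cs.map (clauseAnd v)) = some false) :
    ∀ C ∈ Cs, ∀ ℓ ∈ C, litVal v ℓ ≠ none →
      (∀ a : AP, ℓ = Lit.pos a → v a = some false) ∧
      (∀ a : AP, ℓ = Lit.neg a → v a = some true) := by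
  intro C hC l hl hldef
  have hCff : clauseAnd v C = some false :=
    korList_ff h _ (List.mem_map_of_mem hC)
  obtain ⟨x, hx, hxf⟩ := kandList_ff hCff
  obtain ⟨l2, hl2, hl2v⟩ := List.mem_map.mp hx
  subst hxf
  -- show litVal v l = some false
  have key : litVal v l = some false := by
    by_cases heq : l = l2
    · rw [heq, hl2v]
    · exfalso
      have := two_countP (fun ℓ => (litVal v ℓ).isSome) C l l2 hl hl2 heq
        (by cases hv : litVal v l <;> simp_all)
        (by simp [hl2v])
      have := hdef C hC
      omega
  constructor
  · rintro a rfl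
    simpa [litVal] using key
  · rintro a rfl
    simp only [litVal, knot] at key
    cases hv : v a <;> simp [hv] at key ⊢
    rename_i b; cases b <;> simp_all
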